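/- Graded version of Baer's criterion: Let Γ be a cancellation monoid and M a Γ-graded left R-module over a Γ-graded ring R. Then M is gr-injective if and only if for every homogeneous left ideal I of R, every α ∈ Γ, and every homogeneous homomorphism f: I → M of degree α, there exists m_α ∈ M_α such that f(r) = r·m_α for all r ∈ I. -/

import Mathlib

namespace GradedPaper

open DirectSum

section Defs

variable {Γ : Type} [DecidableEq Γ] [AddCancelMonoid Γ]

section RingDefs

variable {R : Type} [Ring R]

/-- The grading of a module is compatible with the grading of the ring. -/
def SMulClosed (𝒜 : Γ → AddSubgroup R) {M : Type} [AddCommGroup M] [Module R M]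
    (ℳ : Γ → AddSubgroup M) : Prop :=
  ∀ ⦃i j : Γ⦄ ⦃a : R⦄ ⦃m : M⦄, a ∈ 𝒜 i → m ∈ ℳ j → a • m ∈ ℳ (i + j)

/-- The multiplicative condition `R_α R_β ⊆ R_{αβ}` of a graded ring. -/
def MulClosed (𝒜 : Γ → AddSubgroup R) : Prop :=
  ∀ ⦃i j : Γ⦄ ⦃a b : R⦄, a ∈ 𝒜 i → b ∈ 𝒜 j → a * b ∈ 𝒜 (i + j)

/-- A homogeneous (degree-preserving) homomorphism of graded modules. -/
def IsHomogeneousHom {M N : Type} [AddCommGroup M] [Module R M]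
    [AddCommGroup N] [Module R N]
    (ℳ : Γ → AddSubgroup M) (𝒩 : Γ → AddSubgroup N) (f : M →ₗ[R] N) : Prop :=
  ∀ i : Γ, ∀ x ∈ ℳ i, f x ∈ 𝒩 i

/-- A homogeneous homomorphism of degree `d`. -/
def IsHomogeneousOfDeg {M N : Type} [AddCommGroup M] [Module R M]
    [AddCommGroup N] [Module R N]
    (ℳ : Γ → AddSubgroup M) (𝒩 : Γ → AddSubgroup N) (d : Γ) (f : M →ₗ[R] N) : Prop :=
  ∀ i : Γ, ∀ x ∈ ℳ i, f x ∈ 𝒩 (i + d)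

/-- A submodule is graded if it contains the homogeneous components of its elements. -/
def IsGradedSubmodule {M : Type} [AddCommGroup M] [Module R M]
    (ℳ : Γ → AddSubgroup M) [DirectSum.Decomposition ℳ] (N : Submodule R M) : Prop :=
  ∀ x ∈ N, ∀ i : Γ, (DirectSum.decompose ℳ x i : M) ∈ N

/-- The induced grading on a submodule. -/
def subGrading {M : Type} [AddCommGroup M] [Module R M]
    (ℳ : Γ → AddSubgroup M) (N : Submodule R M) : Γ → AddSubgroup ↥N :=
  fun i => AddSubgroup.comap (N.subtype.toAddMonoidHom) (ℳ i)

/-- The induced grading on a quotient module. -/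
def quotGrading {M : Type} [AddCommGroup M] [Module R M]
    (ℳ : Γ → AddSubgroup M) (N : Submodule R M) : Γ → AddSubgroup (M ⧸ N) :=
  fun i => AddSubgroup.map (N.mkQ).toAddMonoidHom (ℳ i)

/-- A graded module is gr-free if it has a basis of homogeneous elements. -/
def IsGrFree {F : Type} [AddCommGroup F] [Module R F] (ℱ : Γ → AddSubgroup F) : Prop :=
  ∃ (ι : Type) (b : Module.Basis ι R F), ∀ j : ι, ∃ i : Γ, b j ∈ ℱ i

/-- Finitely generated gr-free. -/
def IsGrFreeFin {F : Type} [AddCommGroup F] [Module R F] (ℱ : Γ → AddSubgroup F) : Prop :=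
  ∃ (n : ℕ) (b : Module.Basis (Fin n) R F), ∀ j : Fin n, ∃ i : Γ, b j ∈ ℱ i

/-- Gr-projective: homogeneous lifting property against homogeneous epimorphisms. -/
def IsGrProjective (𝒜 : Γ → AddSubgroup R) {P : Type} [AddCommGroup P] [Module R P]
    (𝒬 : Γ → AddSubgroup P) : Prop :=
  ∀ (M N : Type) [AddCommGroup M] [Module R M] [AddCommGroup N] [Module R N]
    (ℳ : Γ → AddSubgroup M) (𝒩 : Γ → AddSubgroup N)
    [DirectSum.Decomposition ℳ] [DirectSum.Decomposition 𝒩],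
    SMulClosed 𝒜 ℳ → SMulClosed 𝒜 𝒩 →
    ∀ (g : M →ₗ[R] N), IsHomogeneousHom ℳ 𝒩 g → Function.Surjective g →
    ∀ (f : P →ₗ[R] N), IsHomogeneousHom 𝒬 𝒩 f →
    ∃ h : P →ₗ[R] M, IsHomogeneousHom 𝒬 ℳ h ∧ g ∘ₗ h = f

/-- Gr-injective: homogeneous extension property against homogeneous monomorphisms. -/
def IsGrInjective (𝒜 : Γ → AddSubgroup R) {E : Type} [AddCommGroup E] [Module R E]
    (ℰ : Γ → AddSubgroup E) : Prop :=
  ∀ (M N : Type) [AddCommGroup M] [Module R M] [AddCommGroup N] [Module R N]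
    (ℳ : Γ → AddSubgroup M) (𝒩 : Γ → AddSubgroup N)
    [DirectSum.Decomposition ℳ] [DirectSum.Decomposition 𝒩],
    SMulClosed 𝒜 ℳ → SMulClosed 𝒜 𝒩 →
    ∀ (g : M →ₗ[R] N), IsHomogeneousHom ℳ 𝒩 g → Function.Injective g →
    ∀ (f : M →ₗ[R] E), IsHomogeneousHom ℳ ℰ f →
    ∃ h : N →ₗ[R] E, IsHomogeneousHom 𝒩 ℰ h ∧ h ∘ₗ g = f

/-- A right nonzero divisor. -/
def IsRightNonZeroDivisor (r : R) : Prop := r ≠ 0 ∧ ∀ b : R, b * r = 0 → b = 0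

/-- Gr-divisible graded module. -/
def IsGrDivisible (𝒜 : Γ → AddSubgroup R) {M : Type} [AddCommGroup M] [Module R M]
    (ℳ : Γ → AddSubgroup M) : Prop :=
  ∀ (i j k : Γ), i + k = j → ∀ r ∈ 𝒜 i, IsRightNonZeroDivisor r →
    ∀ y ∈ ℳ j, ∃ x ∈ ℳ k, r • x = y

/-- Graded isomorphism of graded modules. -/
def GrIso {M N : Type} [AddCommGroup M] [Module R M] [AddCommGroup N] [Module R N]
    (ℳ : Γ → AddSubgroup M) (𝒩 : Γ → AddSubgroup N) : Prop :=
  ∃ e : M ≃ₗ[R] N, IsHomogeneousHom ℳ 𝒩 e.toLinearMap ∧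
    IsHomogeneousHom 𝒩 ℳ e.symm.toLinearMap

/-- Graded left hereditary ring: every homogeneous left ideal is gr-projective. -/
def GrLeftHereditary (𝒜 : Γ → AddSubgroup R) [DirectSum.Decomposition 𝒜] : Prop :=
  ∀ I : Submodule R R, IsGradedSubmodule 𝒜 I → IsGrProjective 𝒜 (subGrading 𝒜 I)

/-- Graded left semihereditary ring: every finitely generated homogeneous left ideal is
gr-projective. -/
def GrLeftSemihereditary (𝒜 : Γ → AddSubgroup R) [DirectSum.Decomposition 𝒜] : Prop :=
  ∀ I : Submodule R R, IsGradedSubmodule 𝒜 I → I.FG → IsGrProjective 𝒜 (subGrading 𝒜 I)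

/-- The natural grading on a direct limit of graded modules. -/
noncomputable def limGrading {ι : Type} [Preorder ι] [DecidableEq ι] (F : ι → Type)
    [∀ i, AddCommGroup (F i)] [∀ i, Module R (F i)]
    (ℱ : ∀ i, Γ → AddSubgroup (F i))
    (t : ∀ i j, i ≤ j → F i →ₗ[R] F j) : Γ → AddSubgroup (Module.DirectLimit F t) :=
  fun γ => ⨆ i, (ℱ i γ).map (Module.DirectLimit.of R ι F t i).toAddMonoidHom

end RingDefs

section CommDefs

variable {R : Type} [CommRing R]

/-- Gr-flat: tensoring preserves homogeneous monomorphisms of graded modules. -/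
def IsGrFlat (𝒜 : Γ → AddSubgroup R) {F : Type} [AddCommGroup F] [Module R F]
    (ℱ : Γ → AddSubgroup F) : Prop :=
  ∀ (M N : Type) [AddCommGroup M] [Module R M] [AddCommGroup N] [Module R N]
    (ℳ : Γ → AddSubgroup M) (𝒩 : Γ → AddSubgroup N)
    [DirectSum.Decomposition ℳ] [DirectSum.Decomposition 𝒩],
    SMulClosed 𝒜 ℳ → SMulClosed 𝒜 𝒩 →
    ∀ (f : M →ₗ[R] N), IsHomogeneousHom ℳ 𝒩 f → Function.Injective f →
      Function.Injective (LinearMap.rTensor F f)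

end CommDefs

end Defs

section Helpers

open DirectSum

variable {Γ : Type} [DecidableEq Γ] [AddCancelMonoid Γ]

section General

variable {X : Type} [AddCommGroup X] (ℬ : Γ → AddSubgroup X) [Decomposition ℬ]

lemma decompose_coe_add (a b : X) (j : Γ) :
    (decompose ℬ (a + b) j : X) = (decompose ℬ a j : X) + (decompose ℬ b j : X) := by
  rw [decompose_add]; rfl

lemma decompose_coe_sum {ι : Type} (s : Finset ι) (u : ι → X) (j : Γ) :
    (decompose ℬ (∑ k ∈ s, u k) j : X) = ∑ k ∈ s, (decompose ℬ (u k) j : X) := by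
  classical
  induction s using Finset.cons_induction with
  | empty => simp
  | cons a s ha ih => rw [Finset.sum_cons, Finset.sum_cons, decompose_coe_add, ih]

lemma coe_coeAddMonoidHom_decompose (x : X) :
    (DirectSum.coeAddMonoidHom ℬ) (decompose ℬ x) = x :=
  (decompose ℬ).symm_apply_apply x

lemma mem_of_forall_ne {x : X} {j : Γ}
    (h : ∀ l, l ≠ j → (decompose ℬ x l : X) = 0) : x ∈ ℬ j := by
  classical
  have hx := DirectSum.sum_support_decompose ℬ x
  have h2 : ∑ i ∈ (decompose ℬ x).support, ((decompose ℬ x) i : X)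
      = ((decompose ℬ x) j : X) := by
    apply Finset.sum_eq_single j
    · intro b _ hb; exact h b hb
    · intro hj; rw [DFinsupp.notMem_support_iff.mp hj]; rfl
  rw [← hx, h2]
  exact ((decompose ℬ x) j).2

variable {R : Type} [Ring R] [Module R X]

lemma decompose_smul_left {𝒜 : Γ → AddSubgroup R} (hsm : SMulClosed 𝒜 ℬ)
    {r : R} {i : Γ} (hr : r ∈ 𝒜 i) (x : X) (j : Γ) :
    (decompose ℬ (r • x) (i + j) : X) = r • (decompose ℬ x j : X) := by
  classical
  conv_lhs => rw [← DirectSum.sum_support_decompose ℬ x, Finset.smul_sum]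
  rw [decompose_coe_sum]
  rw [Finset.sum_eq_single j]
  · exact decompose_of_mem_same ℬ (hsm hr ((decompose ℬ x) j).2)
  · intro b _ hb
    exact decompose_of_mem_ne ℬ (hsm hr ((decompose ℬ x) b).2)
      (fun hh => hb (add_left_cancel hh))
  · intro hj
    rw [DFinsupp.notMem_support_iff.mp hj]
    simp

lemma decompose_smul_right {𝒜 : Γ → AddSubgroup R} [Decomposition 𝒜] (hsm : SMulClosed 𝒜 ℬ)
    {y : X} {γ : Γ} (hy : y ∈ ℬ γ) (r : R) (j : Γ) :
    (decompose ℬ (r • y) (j + γ) : X) = (decompose 𝒜 r j : R) • y := by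
  classical
  conv_lhs => rw [← DirectSum.sum_support_decompose 𝒜 r]
  rw [Finset.sum_smul, decompose_coe_sum]
  rw [Finset.sum_eq_single j]
  · exact decompose_of_mem_same ℬ (hsm ((decompose 𝒜 r) j).2 hy)
  · intro b _ hb
    exact decompose_of_mem_ne ℬ (hsm ((decompose 𝒜 r) b).2 hy)
      (fun hh => hb (add_right_cancel hh))
  · intro hj
    rw [DFinsupp.notMem_support_iff.mp hj]
    simp

lemma decompose_smul_right_ne {𝒜 : Γ → AddSubgroup R} [Decomposition 𝒜] (hsm : SMulClosed 𝒜 ℬ)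
    {y : X} {γ : Γ} (hy : y ∈ ℬ γ) (r : R) {l : Γ} (hl : ∀ j : Γ, j + γ ≠ l) :
    (decompose ℬ (r • y) l : X) = 0 := by
  classical
  conv_lhs => rw [← DirectSum.sum_support_decompose 𝒜 r]
  rw [Finset.sum_smul, decompose_coe_sum]
  apply Finset.sum_eq_zero
  intro k _
  exact decompose_of_mem_ne ℬ (hsm ((decompose 𝒜 r) k).2 hy) (hl k)

end General

end Helpers
section Helpers2

set_option maxHeartbeats 1000000
set_option synthInstance.maxHeartbeats 400000

open DirectSum

variable {Γ : Type} [DecidableEq Γ] [AddCancelMonoid Γ]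
variable {R : Type} [Ring R]

section Sub

variable {M : Type} [AddCommGroup M] [Module R M]
  (ℳ : Γ → AddSubgroup M) [Decomposition ℳ] (N : Submodule R M)

lemma mem_subGrading_iff {i : Γ} {x : ↥N} :
    x ∈ subGrading ℳ N i ↔ (x : M) ∈ ℳ i := Iff.rfl

lemma subGrading_coe_decompose (hN : IsGradedSubmodule ℳ N)
    (z : ⨁ i, ↥(subGrading ℳ N i)) (j : Γ) :
    (decompose ℳ (((DirectSum.coeAddMonoidHom (subGrading ℳ N)) z : ↥N) : M) j : M)
      = ((z j : ↥N) : M) := by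
  induction z using DirectSum.induction_on with
  | zero =>
      rw [map_zero]
      simp
  | of i x =>
      have hx : ((x : ↥N) : M) ∈ ℳ i := x.2
      rw [DirectSum.coeAddMonoidHom_of]
      rcases eq_or_ne i j with rfl | h
      · rw [decompose_of_mem_same ℳ hx, DirectSum.of_eq_same]
      · rw [decompose_of_mem_ne ℳ hx h, DirectSum.of_eq_of_ne _ _ _ h.symm]
        rfl
  | add a b ha hb =>
      rw [map_add, DirectSum.add_apply, Submodule.coe_add, decompose_coe_add, ha, hb]
      rfl

lemma subGrading_coe_injective (hN : IsGradedSubmodule ℳ N) :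
    Function.Injective (DirectSum.coeAddMonoidHom (subGrading ℳ N)) := by
  intro a b hab
  refine DFinsupp.ext fun j => ?_
  have h1 := subGrading_coe_decompose ℳ N hN a j
  have h2 := subGrading_coe_decompose ℳ N hN b j
  rw [hab] at h1
  exact Subtype.ext (Subtype.ext (h1.symm.trans h2))

/-- The induced decomposition on a graded submodule. -/
noncomputable def subDecomp (hN : IsGradedSubmodule ℳ N) :
    Decomposition (subGrading ℳ N) := by
  classical
  set dec : ↥N → ⨁ i, ↥(subGrading ℳ N i) := fun x =>
    ∑ i ∈ (decompose ℳ (x : M)).support,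
      DirectSum.of (fun i => ↥(subGrading ℳ N i)) i
        ⟨⟨(decompose ℳ (x : M) i : M), hN x x.2 i⟩, ((decompose ℳ (x : M)) i).2⟩ with hdec
  have hleft : Function.LeftInverse (DirectSum.coeAddMonoidHom (subGrading ℳ N)) dec := by
    intro x
    apply Subtype.ext
    rw [hdec]
    dsimp only
    rw [map_sum]
    simp only [DirectSum.coeAddMonoidHom_of]
    rw [AddSubmonoidClass.coe_finset_sum]
    exact DirectSum.sum_support_decompose ℳ (x : M)
  exact ⟨dec, hleft, fun y => subGrading_coe_injective ℳ N hN (hleft _)⟩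
end Sub

section Shift

variable {X : Type} [AddCommGroup X]

/-- Shift of a grading by `α` : the degree-`j+α` part is the old degree-`j` part. -/
def shiftG (ℬ : Γ → AddSubgroup X) (α : Γ) : Γ → AddSubgroup X :=
  fun i => ⨆ j, ⨆ _ : j + α = i, ℬ j

lemma shiftG_add (ℬ : Γ → AddSubgroup X) (α j : Γ) : shiftG ℬ α (j + α) = ℬ j := by
  apply le_antisymm
  · exact iSup_le fun k => iSup_le fun hk => by rw [add_right_cancel hk]
  · exact le_iSup₂ (f := fun k (_ : k + α = j + α) => ℬ k) j rfl

lemma mem_shiftG {ℬ : Γ → AddSubgroup X} {α i : Γ} {x : X} (hx : x ∈ shiftG ℬ α i) :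
    (∃ j, j + α = i ∧ x ∈ ℬ j) ∨ x = 0 := by
  by_cases h : ∃ j : Γ, j + α = i
  · obtain ⟨j, rfl⟩ := h
    exact Or.inl ⟨j, rfl, (shiftG_add ℬ α j) ▸ hx⟩
  · right
    have hb : shiftG ℬ α i = ⊥ := by
      rw [eq_bot_iff]; exact iSup_le fun j => iSup_le fun hj => absurd ⟨j, hj⟩ h
    rw [hb] at hx
    simpa using hx

variable (ℬ : Γ → AddSubgroup X) [Decomposition ℬ] (α : Γ)

/-- The shift-reindexing map on direct sums. -/
noncomputable def shiftHom : (⨁ i, ↥(ℬ i)) →+ ⨁ i, ↥(shiftG ℬ α i) :=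
  DirectSum.toAddMonoid fun j =>
    (DirectSum.of (fun i => ↥(shiftG ℬ α i)) (j + α)).comp
      (AddSubgroup.inclusion (shiftG_add ℬ α j).ge)

lemma shiftHom_of (j : Γ) (x : ↥(ℬ j)) :
    shiftHom ℬ α (DirectSum.of _ j x)
      = DirectSum.of (fun i => ↥(shiftG ℬ α i)) (j + α)
          (AddSubgroup.inclusion (shiftG_add ℬ α j).ge x) :=
  DirectSum.toAddMonoid_of _ _ _

/-- The decomposition associated with a shifted grading. -/
noncomputable def shiftDecomp : Decomposition (shiftG ℬ α) := by
  refine ⟨fun x => shiftHom ℬ α (decompose ℬ x), ?_, ?_⟩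
  · intro x
    have key : (DirectSum.coeAddMonoidHom (shiftG ℬ α)).comp (shiftHom ℬ α)
        = DirectSum.coeAddMonoidHom ℬ := by
      apply DirectSum.addHom_ext
      intro j y
      simp only [AddMonoidHom.comp_apply, shiftHom_of, DirectSum.coeAddMonoidHom_of]
      rfl
    calc (DirectSum.coeAddMonoidHom (shiftG ℬ α)) (shiftHom ℬ α (decompose ℬ x))
        = (DirectSum.coeAddMonoidHom ℬ) (decompose ℬ x) := by
          rw [← AddMonoidHom.comp_apply, key]
      _ = x := coe_coeAddMonoidHom_decompose ℬ x
  · intro y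
    induction y using DirectSum.induction_on with
    | zero =>
        rw [map_zero]
        dsimp only
        rw [DirectSum.decompose_zero, map_zero]
    | of i x =>
        dsimp only
        rw [DirectSum.coeAddMonoidHom_of]
        rcases mem_shiftG x.2 with ⟨j, rfl, hj⟩ | h0
        · rw [decompose_of_mem ℬ hj, shiftHom_of]
          exact congrArg _ (Subtype.ext rfl)
        · have hx0 : x = 0 := Subtype.ext h0
          subst hx0
          rw [ZeroMemClass.coe_zero, DirectSum.decompose_zero, map_zero, map_zero]
    | add a b ha hb =>
        dsimp only at ha hb ⊢
        rw [map_add, DirectSum.decompose_add, map_add, ha, hb]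

end Shift

end Helpers2
section Helpers3

open DirectSum

variable {Γ : Type} [DecidableEq Γ] [AddCancelMonoid Γ]
variable {R : Type} [Ring R]

lemma decompose_map {A B : Type} [AddCommGroup A] [Module R A] [AddCommGroup B] [Module R B]
    (𝒶 : Γ → AddSubgroup A) (𝒷 : Γ → AddSubgroup B) [Decomposition 𝒶] [Decomposition 𝒷]
    {φ : A →ₗ[R] B} (hφ : IsHomogeneousHom 𝒶 𝒷 φ) (x : A) (l : Γ) :
    (decompose 𝒷 (φ x) l : B) = φ (decompose 𝒶 x l : A) := by
  classical
  conv_lhs => rw [← DirectSum.sum_support_decompose 𝒶 x, map_sum]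
  rw [decompose_coe_sum]
  rw [Finset.sum_eq_single l]
  · exact decompose_of_mem_same 𝒷 (hφ l _ ((decompose 𝒶 x) l).2)
  · intro b _ hb
    exact decompose_of_mem_ne 𝒷 (hφ b _ ((decompose 𝒶 x) b).2) hb
  · intro hj
    rw [DFinsupp.notMem_support_iff.mp hj]
    simp

end Helpers3
set_option maxHeartbeats 1000000 in
/-- graded version of Baer's criterion. -/
theorem graded_baer {Γ R : Type} [DecidableEq Γ] [AddCancelMonoid Γ] [Ring R]
    (𝒜 : Γ → AddSubgroup R) [DirectSum.Decomposition 𝒜] (hmul : MulClosed 𝒜)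
    {M : Type} [AddCommGroup M] [Module R M]
    (ℳ : Γ → AddSubgroup M) [DirectSum.Decomposition ℳ] (hsm : SMulClosed 𝒜 ℳ) :
    IsGrInjective 𝒜 ℳ ↔
      ∀ (I : Submodule R R), IsGradedSubmodule 𝒜 I →
        ∀ (α : Γ) (f : ↥I →ₗ[R] M), IsHomogeneousOfDeg (subGrading 𝒜 I) ℳ α f →
          ∃ m ∈ ℳ α, ∀ r : ↥I, f r = (r : R) • m := by
  classical
  constructor
  · -- gr-injective → Baer condition
    intro hinj I hI α f hf
    letI : Decomposition (subGrading 𝒜 I) := subDecomp 𝒜 I hI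
    letI : Decomposition (shiftG (subGrading 𝒜 I) α) := shiftDecomp (subGrading 𝒜 I) α
    letI : Decomposition (shiftG 𝒜 α) := shiftDecomp 𝒜 α
    have hsmI : SMulClosed 𝒜 (shiftG (subGrading 𝒜 I) α) := by
      intro i j a x ha hx
      rcases mem_shiftG hx with ⟨k, rfl, hk⟩ | h0
      · have h1 : a • x ∈ subGrading 𝒜 I (i + k) := by
          show ((a • x : ↥I) : R) ∈ 𝒜 (i + k)
          have : ((a • x : ↥I) : R) = a * (x : R) := rfl
          rw [this]
          exact hmul ha hk
        have h2 : a • x ∈ shiftG (subGrading 𝒜 I) α ((i + k) + α) := by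
          rw [shiftG_add]; exact h1
        rwa [add_assoc] at h2
      · rw [h0, smul_zero]; exact zero_mem _
    have hsmA : SMulClosed 𝒜 (shiftG 𝒜 α) := by
      intro i j a x ha hx
      rcases mem_shiftG hx with ⟨k, rfl, hk⟩ | h0
      · have h2 : a • x ∈ shiftG 𝒜 α ((i + k) + α) := by
          rw [shiftG_add]; exact hmul ha hk
        rwa [add_assoc] at h2
      · rw [h0, smul_zero]; exact zero_mem _
    have hg : IsHomogeneousHom (shiftG (subGrading 𝒜 I) α) (shiftG 𝒜 α) I.subtype := by
      intro i x hx
      rcases mem_shiftG hx with ⟨k, rfl, hk⟩ | h0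
      · rw [shiftG_add]; exact hk
      · rw [h0]; exact zero_mem _
    have hfh : IsHomogeneousHom (shiftG (subGrading 𝒜 I) α) ℳ f := by
      intro i x hx
      rcases mem_shiftG hx with ⟨k, rfl, hk⟩ | h0
      · exact hf k x hk
      · rw [h0, map_zero]; exact zero_mem _
    obtain ⟨h, hh, hcomp⟩ := hinj (↥I) R (shiftG (subGrading 𝒜 I) α) (shiftG 𝒜 α)
      hsmI hsmA I.subtype hg (Submodule.injective_subtype I) f hfh
    refine ⟨(decompose ℳ (h 1) α : M), ((decompose ℳ (h 1)) α).2, ?_⟩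
    have key : ∀ r ∈ I, r • h 1 = r • (decompose ℳ (h 1) α : M) := by
      intro r hr
      have hcompk : ∀ k : Γ, (decompose 𝒜 r k : R) • h 1
          = (decompose 𝒜 r k : R) • (decompose ℳ (h 1) α : M) := by
        intro k
        have hrk : (decompose 𝒜 r k : R) ∈ 𝒜 k := ((decompose 𝒜 r) k).2
        have hrkI : (decompose 𝒜 r k : R) ∈ I := hI r hr k
        have hfr : f ⟨_, hrkI⟩ ∈ ℳ (k + α) := hf k ⟨_, hrkI⟩ hrk
        have hfr2 : f ⟨_, hrkI⟩ = (decompose 𝒜 r k : R) • h 1 := by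
          have h1 : h ((decompose 𝒜 r k : R)) = f ⟨_, hrkI⟩ :=
            LinearMap.ext_iff.mp hcomp ⟨_, hrkI⟩
          rw [← h1]
          conv_lhs => rw [show (decompose 𝒜 r k : R) = (decompose 𝒜 r k : R) • (1 : R) by
            rw [smul_eq_mul, mul_one]]
          rw [map_smul]
        rw [hfr2] at hfr
        have hds := decompose_of_mem_same ℳ hfr
        conv_lhs => rw [← hds]
        rw [decompose_smul_left ℳ hsm hrk (h 1) α]
      calc r • h 1 = (∑ k ∈ (decompose 𝒜 r).support, (decompose 𝒜 r k : R)) • h 1 := by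
            rw [DirectSum.sum_support_decompose]
        _ = ∑ k ∈ (decompose 𝒜 r).support, (decompose 𝒜 r k : R) • h 1 := by
            rw [Finset.sum_smul]
        _ = ∑ k ∈ (decompose 𝒜 r).support,
              (decompose 𝒜 r k : R) • (decompose ℳ (h 1) α : M) := by
            exact Finset.sum_congr rfl fun k _ => hcompk k
        _ = (∑ k ∈ (decompose 𝒜 r).support, (decompose 𝒜 r k : R))
              • (decompose ℳ (h 1) α : M) := by rw [Finset.sum_smul]
        _ = r • (decompose ℳ (h 1) α : M) := by rw [DirectSum.sum_support_decompose]
    intro r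
    have h1 : h (r : R) = f r := LinearMap.ext_iff.mp hcomp r
    have h2 : h (r : R) = (r : R) • h 1 := by
      conv_lhs => rw [show (r : R) = (r : R) • (1 : R) by rw [smul_eq_mul, mul_one]]
      rw [map_smul]
    rw [← h1, h2]
    exact key (r : R) r.2
  · -- Baer condition → gr-injective
    intro hbaer A B _ _ _ _ 𝒶 𝒷 _ _ hsA hsB g hg hginj f hfh
    set S : Set (Submodule R (B × M)) :=
      {G | (∀ a : A, ((g a, f a) : B × M) ∈ G) ∧ (∀ mm : M, ((0 : B), mm) ∈ G → mm = 0) ∧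
        ∀ u ∈ G, ∀ l : Γ, (((decompose 𝒷 u.1 l : B), (decompose ℳ u.2 l : M)) : B × M) ∈ G}
      with hS
    have hG0 : LinearMap.range (LinearMap.prod g f) ∈ S := by
      refine ⟨fun a => ⟨a, rfl⟩, ?_, ?_⟩
      · rintro mm ⟨a, ha⟩
        have h1 : g a = 0 := congrArg Prod.fst ha
        have h2 : a = 0 := hginj (by rw [h1, map_zero])
        have h3 : f a = mm := congrArg Prod.snd ha
        rw [← h3, h2, map_zero]
      · rintro u ⟨a, rfl⟩ l
        refine ⟨(decompose 𝒶 a l : A), ?_⟩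
        have e1 : g (decompose 𝒶 a l : A) = (decompose 𝒷 (g a) l : B) :=
          (decompose_map 𝒶 𝒷 hg a l).symm
        have e2 : f (decompose 𝒶 a l : A) = (decompose ℳ (f a) l : M) :=
          (decompose_map 𝒶 ℳ hfh a l).symm
        show ((g _, f _) : B × M) = _
        rw [e1, e2]
        rfl
    obtain ⟨Gm, _, hmax⟩ := zorn_le_nonempty₀ S (by
      intro c hcS hchain y hy
      refine ⟨sSup c, ⟨?_, ?_, ?_⟩, fun z hz => le_sSup hz⟩
      · intro a
        exact le_sSup hy ((hcS hy).1 a)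
      · intro mm hmm
        obtain ⟨G, hGc, hmmG⟩ := (Submodule.mem_sSup_of_directed ⟨y, hy⟩
          hchain.directedOn).mp hmm
        exact (hcS hGc).2.1 mm hmmG
      · intro u hu l
        obtain ⟨G, hGc, huG⟩ := (Submodule.mem_sSup_of_directed ⟨y, hy⟩
          hchain.directedOn).mp hu
        exact le_sSup hGc ((hcS hGc).2.2 u huG l)) _ hG0
    have hGmS : Gm ∈ S := hmax.prop
    set p : ↥Gm →ₗ[R] B := (LinearMap.fst R B M).comp Gm.subtype with hp
    have hfstmem : ∀ u ∈ Gm, (u : B × M).1 ∈ LinearMap.range p := fun u hu => ⟨⟨u, hu⟩, rfl⟩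
    have hpinj : Function.Injective p := by
      intro u v huv
      have hmem : (((u : B × M).1 - (v : B × M).1, (u : B × M).2 - (v : B × M).2) : B × M)
          ∈ Gm := sub_mem u.2 v.2
      have h1 : (u : B × M).1 - (v : B × M).1 = 0 := sub_eq_zero_of_eq huv
      rw [h1] at hmem
      have h2 := hGmS.2.1 _ hmem
      exact Subtype.ext (Prod.ext huv (sub_eq_zero.mp h2))
    have hDgr : ∀ x ∈ LinearMap.range p, ∀ l : Γ,
        (decompose 𝒷 x l : B) ∈ LinearMap.range p := by
      rintro x ⟨u, rfl⟩ l
      exact ⟨⟨_, hGmS.2.2 u u.2 l⟩, rfl⟩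
    have hrange : LinearMap.range p = ⊤ := by
      by_contra hne
      obtain ⟨b, hb⟩ : ∃ b : B, b ∉ LinearMap.range p := by
        by_contra hall
        push_neg at hall
        exact hne (Submodule.eq_top_iff'.mpr hall)
      obtain ⟨γ, hyout⟩ : ∃ γ : Γ, (decompose 𝒷 b γ : B) ∉ LinearMap.range p := by
        by_contra hall
        push_neg at hall
        apply hb
        rw [← DirectSum.sum_support_decompose 𝒷 b]
        exact Submodule.sum_mem _ fun k _ => hall k
      set y : B := (decompose 𝒷 b γ : B) with hy_def
      have hy : y ∈ 𝒷 γ := ((decompose 𝒷 b) γ).2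
      set I : Submodule R R := (LinearMap.range p).comap (LinearMap.toSpanSingleton R B y)
        with hI_def
      have hImem : ∀ r : R, r ∈ I ↔ r • y ∈ LinearMap.range p := by
        intro r
        rw [hI_def, Submodule.mem_comap, LinearMap.toSpanSingleton_apply]
      have hIgr : IsGradedSubmodule 𝒜 I := by
        intro r hr j
        rw [hImem]
        have h1 := hDgr _ ((hImem r).mp hr) (j + γ)
        rwa [decompose_smul_right 𝒷 hsB hy r j] at h1
      set e := LinearEquiv.ofInjective p hpinj with he
      set φ : ↥I →ₗ[R] ↥(LinearMap.range p) :=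
        (LinearMap.toSpanSingleton R B y).restrict (fun r hr => (hImem r).mp hr) with hφ
      set f' : ↥I →ₗ[R] M :=
        ((LinearMap.snd R B M).comp Gm.subtype).comp ((e.symm.toLinearMap).comp φ) with hf'
      have hf'spec : ∀ r : ↥I, (((r : R) • y, f' r) : B × M) ∈ Gm := by
        intro r
        have h2 : ((e.symm (φ r) : ↥Gm) : B × M).1 = (r : R) • y := by
          have h1 : ((e (e.symm (φ r)) : ↥(LinearMap.range p)) : B)
              = ((φ r : ↥(LinearMap.range p)) : B) := by rw [e.apply_symm_apply]
          rw [he, LinearEquiv.ofInjective_apply] at h1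
          have h3 : ((φ r : ↥(LinearMap.range p)) : B) = (r : R) • y := by
            rfl
          rw [h3] at h1
          exact h1
        have h4 : (((e.symm (φ r) : ↥Gm) : B × M).1, ((e.symm (φ r) : ↥Gm) : B × M).2)
            ∈ Gm := by
          rw [Prod.mk.eta]
          exact (e.symm (φ r)).2
        rw [h2] at h4
        exact h4
      have hf'deg : IsHomogeneousOfDeg (subGrading 𝒜 I) ℳ γ f' := by
        intro i r hr
        have hry : (r : R) • y ∈ 𝒷 (i + γ) := hsB hr hy
        apply mem_of_forall_ne ℳ
        intro l hl
        have hcomp := hGmS.2.2 _ (hf'spec r) l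
        have h0 : (decompose 𝒷 ((((r : R) • y, f' r) : B × M)).1 l : B) = 0 :=
          decompose_of_mem_ne 𝒷 hry (Ne.symm hl)
        rw [h0] at hcomp
        exact hGmS.2.1 _ hcomp
      obtain ⟨m', hm'mem, hm'⟩ := hbaer I hIgr γ f' hf'deg
      set G' := Gm ⊔ Submodule.span R {((y, m') : B × M)} with hG'
      have hymG' : ((y, m') : B × M) ∈ G' :=
        Submodule.mem_sup_right (Submodule.mem_span_singleton_self _)
      have hG'S : G' ∈ S := by
        refine ⟨fun a => Submodule.mem_sup_left (hGmS.1 a), ?_, ?_⟩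
        · intro mm hmm
          rcases Submodule.mem_sup.mp hmm with ⟨v, hv, w, hw, hvw⟩
          rcases Submodule.mem_span_singleton.mp hw with ⟨r, rfl⟩
          have hv' : v = ((-(r • y) : B), mm - r • m') := by
            have hv2 : v = ((0 : B), mm) - r • ((y, m') : B × M) := by
              rw [← hvw]; abel
            rw [hv2, Prod.smul_mk, Prod.mk_sub_mk, zero_sub]
          rw [hv'] at hv
          have hneg : -(r • y) ∈ LinearMap.range p := by
            have := hfstmem _ hv
            exact this
          have hrI : -r ∈ I := by
            rw [hImem, neg_smul]
            exact hneg
          have hs : (((-r) • y, (-r) • m') : B × M) ∈ Gm := by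
            have hs1 := hf'spec ⟨-r, hrI⟩
            rw [hm' ⟨-r, hrI⟩] at hs1
            exact hs1
          have hsub := sub_mem hv hs
          have heq : (((-(r • y) : B), mm - r • m') : B × M)
              - (((-r) • y, (-r) • m') : B × M) = ((0 : B), mm) := by
            rw [Prod.mk_sub_mk, neg_smul, neg_smul, Prod.mk.injEq]
            constructor
            · abel
            · abel
          rw [heq] at hsub
          exact hGmS.2.1 mm hsub
        · intro u hu l
          rcases Submodule.mem_sup.mp hu with ⟨v, hv, w, hw, hvw⟩
          rcases Submodule.mem_span_singleton.mp hw with ⟨r, rfl⟩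
          subst hvw
          have hu1 : (v + r • ((y, m') : B × M)).1 = v.1 + r • y := rfl
          have hu2 : (v + r • ((y, m') : B × M)).2 = v.2 + r • m' := rfl
          by_cases hex : ∃ j : Γ, j + γ = l
          · obtain ⟨j, rfl⟩ := hex
            have e1 : (decompose 𝒷 (v + r • ((y, m') : B × M)).1 (j + γ) : B)
                = (decompose 𝒷 v.1 (j + γ) : B) + (decompose 𝒜 r j : R) • y := by
              rw [hu1, decompose_coe_add, decompose_smul_right 𝒷 hsB hy]
            have e2 : (decompose ℳ (v + r • ((y, m') : B × M)).2 (j + γ) : M)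
                = (decompose ℳ v.2 (j + γ) : M) + (decompose 𝒜 r j : R) • m' := by
              rw [hu2, decompose_coe_add, decompose_smul_right ℳ hsm hm'mem]
            rw [e1, e2]
            have hsp : ((decompose 𝒜 r j : R) • y, (decompose 𝒜 r j : R) • m')
                ∈ Submodule.span R {((y, m') : B × M)} := by
              rw [← Prod.smul_mk]
              exact Submodule.smul_mem _ _ (Submodule.mem_span_singleton_self _)
            exact add_mem (Submodule.mem_sup_left (hGmS.2.2 v hv (j + γ)))
              (Submodule.mem_sup_right hsp)
          · push_neg at hex
            have e1 : (decompose 𝒷 (v + r • ((y, m') : B × M)).1 l : B)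
                = (decompose 𝒷 v.1 l : B) := by
              rw [hu1, decompose_coe_add, decompose_smul_right_ne 𝒷 hsB hy r hex, add_zero]
            have e2 : (decompose ℳ (v + r • ((y, m') : B × M)).2 l : M)
                = (decompose ℳ v.2 l : M) := by
              rw [hu2, decompose_coe_add, decompose_smul_right_ne ℳ hsm hm'mem r hex, add_zero]
            rw [e1, e2]
            exact Submodule.mem_sup_left (hGmS.2.2 v hv l)
      have hle : G' ≤ Gm := hmax.2 hG'S le_sup_left
      have hymGm : ((y, m') : B × M) ∈ Gm := hle hymG'
      exact hyout (hfstmem _ hymGm)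
    -- construct the extension
    have hpsurj : Function.Surjective p := LinearMap.range_eq_top.mp hrange
    set q := LinearEquiv.ofBijective p ⟨hpinj, hpsurj⟩ with hq
    set h : B →ₗ[R] M := ((LinearMap.snd R B M).comp Gm.subtype).comp q.symm.toLinearMap
      with hh_def
    have hmemh : ∀ b : B, ((b, h b) : B × M) ∈ Gm := by
      intro b
      have h1 : ((q.symm b : ↥Gm) : B × M).1 = b := by
        have h2 : q (q.symm b) = b := q.apply_symm_apply b
        exact h2
      have h4 : (((q.symm b : ↥Gm) : B × M).1, ((q.symm b : ↥Gm) : B × M).2) ∈ Gm := by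
        rw [Prod.mk.eta]
        exact (q.symm b).2
      rw [h1] at h4
      exact h4
    refine ⟨h, ?_, ?_⟩
    · intro l b hb
      apply mem_of_forall_ne ℳ
      intro l' hl'
      have hcomp := hGmS.2.2 _ (hmemh b) l'
      have h0 : (decompose 𝒷 (((b, h b) : B × M)).1 l' : B) = 0 :=
        decompose_of_mem_ne 𝒷 hb (Ne.symm hl')
      rw [h0] at hcomp
      exact hGmS.2.1 _ hcomp
    · apply LinearMap.ext
      intro a
      have h1 := hmemh (g a)
      have h2 := hGmS.1 a
      have h3 : ((g a - g a : B), h (g a) - f a) ∈ Gm := sub_mem h1 h2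
      rw [sub_self] at h3
      have h4 := hGmS.2.1 _ h3
      show h (g a) = f a
      rw [sub_eq_zero] at h4
      exact h4
end GradedPaper
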